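/- Let X, Y, Z, W be rational numbers with X^4 + Y^4 = Z^4 + W^4, ZW ≠ 0, and XYZW·(X^2 − Y^2)·(X^2 − W^2)·(Y^2 − W^2) ≠ 0. Then the numbers a = (X^4 − W^4)/(Z^2 W^2), b = −W^2/Z^2, c = (Y^4 − W^4)/(Z^2 W^2), d = Z^2/W^2 form a quartic rational Diophantine quadruple: they are pairwise distinct, nonzero, and each of ab+1, ac+1, ad+1, bc+1, bd+1, cd+1 is a fourth power of a rational number. -/

import Mathlib

theorem euler_point_gives_quartic_quadruple
    (X Y Z W : ℚ) (hE : X ^ 4 + Y ^ 4 = Z ^ 4 + W ^ 4) (hZW : Z * W ≠ 0)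
    (hnd : X * Y * Z * W * (X ^ 2 - Y ^ 2) * (X ^ 2 - W ^ 2) * (Y ^ 2 - W ^ 2) ≠ 0)
    (a b c d : ℚ)
    (ha : a = (X ^ 4 - W ^ 4) / (Z ^ 2 * W ^ 2))
    (hb : b = -(W ^ 2 / Z ^ 2))
    (hc : c = (Y ^ 4 - W ^ 4) / (Z ^ 2 * W ^ 2))
    (hd : d = Z ^ 2 / W ^ 2) :
    (a ≠ b ∧ a ≠ c ∧ a ≠ d ∧ b ≠ c ∧ b ≠ d ∧ c ≠ d) ∧
    (a ≠ 0 ∧ b ≠ 0 ∧ c ≠ 0 ∧ d ≠ 0) ∧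
    (∃ q : ℚ, a * b + 1 = q ^ 4) ∧
    (∃ q : ℚ, a * c + 1 = q ^ 4) ∧
    (∃ q : ℚ, a * d + 1 = q ^ 4) ∧
    (∃ q : ℚ, b * c + 1 = q ^ 4) ∧
    (∃ q : ℚ, b * d + 1 = q ^ 4) ∧
    (∃ q : ℚ, c * d + 1 = q ^ 4) := by
  have hZ : Z ≠ 0 := fun h => hZW (by simp [h])
  have hW : W ≠ 0 := fun h => hZW (by simp [h])
  simp only [mul_ne_zero_iff] at hnd
  obtain ⟨⟨⟨⟨⟨⟨hX, hY⟩, -⟩, -⟩, hXY⟩, hXW⟩, hYW⟩ := hnd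
  have hX2 : (0:ℚ) < X ^ 2 := lt_of_le_of_ne (by positivity) (Ne.symm (pow_ne_zero 2 hX))
  have hY2 : (0:ℚ) < Y ^ 2 := lt_of_le_of_ne (by positivity) (Ne.symm (pow_ne_zero 2 hY))
  have hZ2 : (0:ℚ) < Z ^ 2 := lt_of_le_of_ne (by positivity) (Ne.symm (pow_ne_zero 2 hZ))
  have hW2 : (0:ℚ) < W ^ 2 := lt_of_le_of_ne (by positivity) (Ne.symm (pow_ne_zero 2 hW))
  have hXW4 : X ^ 4 - W ^ 4 ≠ 0 := by
    intro h
    rcases mul_eq_zero.1 (show (X^2-W^2)*(X^2+W^2) = 0 by linear_combination h) with h3 | h3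
    · exact hXW h3
    · nlinarith
  have hYW4 : Y ^ 4 - W ^ 4 ≠ 0 := by
    intro h
    rcases mul_eq_zero.1 (show (Y^2-W^2)*(Y^2+W^2) = 0 by linear_combination h) with h3 | h3
    · exact hYW h3
    · nlinarith
  subst ha hb hc hd
  refine ⟨⟨?_, ?_, ?_, ?_, ?_, ?_⟩,
    ⟨div_ne_zero hXW4 (by positivity), ?_, div_ne_zero hYW4 (by positivity), ?_⟩,
    ⟨Y / Z, ?_⟩, ⟨X * Y / (Z * W), ?_⟩, ⟨X / W, ?_⟩, ⟨X / Z, ?_⟩, ⟨0, ?_⟩, ⟨Y / W, ?_⟩⟩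
  · intro h; field_simp at h
    exact pow_ne_zero 4 hX (by nlinarith)
  · intro h; field_simp at h
    rcases mul_eq_zero.1 (show (X^2-Y^2)*(X^2+Y^2) = 0 by nlinarith) with h3 | h3
    · exact hXY h3
    · nlinarith
  · intro h; field_simp at h
    exact pow_ne_zero 4 hY (by nlinarith)
  · intro h; field_simp at h
    exact pow_ne_zero 4 hY (by nlinarith)
  · intro h; field_simp at h
    nlinarith
  · intro h; field_simp at h
    exact pow_ne_zero 4 hX (by nlinarith)
  · simp only [neg_ne_zero]; positivity
  · positivity
  · field_simp; ring_nf; linear_combination (-1) * hE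
  · field_simp; ring_nf; linear_combination (-(W^4)) * hE
  · field_simp; ring
  · field_simp; ring_nf; linear_combination (-1) * hE
  · field_simp; ring
  · field_simp; ring
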